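/- For every α > 0, every z ∈ ℝ, and all t, s ∈ ℝ with t ≠ s, one has |e^{itz} − e^{isz}| ≤ 2 (ln(e^α + |z|/2) / ln(e^α + 1/|t − s|))^α. -/

import Mathlib

private theorem mono_aux' (α : ℝ) (hα : 0 < α) :
    MonotoneOn (fun x : ℝ => x / (Real.log (Real.exp α + x)) ^ α) (Set.Ici 0) := by
  set E := Real.exp α with hEdef
  set L : ℝ → ℝ := fun x => Real.log (E + x) with hLdef
  have hE : ∀ x : ℝ, 0 ≤ x → 0 < E + x := fun x hx => by positivity
  have hL : ∀ x : ℝ, 0 ≤ x → α ≤ L x := by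
    intro x hx
    calc α = Real.log (Real.exp α) := (Real.log_exp α).symm
    _ ≤ _ := Real.log_le_log (Real.exp_pos α) (by simp [hEdef]; linarith)
  have hLpos : ∀ x : ℝ, 0 ≤ x → 0 < L x := fun x hx => lt_of_lt_of_le hα (hL x hx)
  have hd : ∀ x : ℝ, 0 ≤ x → HasDerivAt (fun x : ℝ => x / (L x) ^ α)
      ((1 * (L x) ^ α - x * (1/(E+x) * α * (L x) ^ (α-1))) / ((L x) ^ α) ^ 2) x := by
    intro x hx
    have hd1 : HasDerivAt (fun x : ℝ => E + x) 1 x := (hasDerivAt_id x).const_add E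
    have hd2 : HasDerivAt L (1/(E+x)) x := hd1.log (hE x hx).ne'
    have hd3 : HasDerivAt (fun x => (L x) ^ α) (1/(E+x) * α * (L x) ^ (α-1)) x :=
      hd2.rpow_const (Or.inl (hLpos x hx).ne')
    exact (hasDerivAt_id x).div hd3 (Real.rpow_pos_of_pos (hLpos x hx) α).ne'
  apply monotoneOn_of_deriv_nonneg (convex_Ici 0)
  · intro x hx
    exact ((hd x hx).differentiableAt.continuousAt).continuousWithinAt
  · intro x hx
    rw [interior_Ici] at hx
    exact (hd x hx.le).differentiableAt.differentiableWithinAt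
  · intro x hx
    rw [interior_Ici] at hx
    rw [(hd x hx.le).deriv]
    have h1 : (0:ℝ) < E + x := hE x hx.le
    have h2 : α ≤ L x := hL x hx.le
    have h3 : 0 < L x := hLpos x hx.le
    have h4 : (L x) ^ α = (L x) ^ (α-1) * L x := by
      rw [← Real.rpow_add_one h3.ne' (α-1)]; ring_nf
    have h5 : (0:ℝ) < (L x) ^ (α-1) := Real.rpow_pos_of_pos h3 _
    apply div_nonneg _ (by positivity)
    rw [h4]
    have : x * (1/(E+x) * α * (L x) ^ (α-1)) = (L x) ^ (α-1) * (α * x / (E+x)) := by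
      field_simp
    rw [this, one_mul, ← mul_sub]
    apply mul_nonneg h5.le
    rw [sub_nonneg, div_le_iff₀ h1]
    nlinarith [Real.exp_pos α]

open Complex in
private theorem norm_id' (t s z : ℝ) :
    ‖Complex.exp (Complex.I * t * z) - Complex.exp (Complex.I * s * z)‖
      = 2 * |Real.sin ((t-s)*z/2)| := by
  set w : ℂ := (((t-s)*z/2 : ℝ) : ℂ) with hw
  have h1 : Complex.exp (w*I) - Complex.exp (-w*I) = 2*Complex.sin w*I := by
    rw [Complex.exp_mul_I, show (-w*I) = (-w)*I by ring, Complex.exp_mul_I,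
      Complex.cos_neg, Complex.sin_neg]; ring
  have key : Complex.exp (Complex.I * t * z) - Complex.exp (Complex.I * s * z)
      = Complex.exp (Complex.I * ((((t+s)*z/2 : ℝ)) : ℂ)) * (2 * Complex.sin w * I) := by
    rw [← h1, mul_sub, ← Complex.exp_add, ← Complex.exp_add]
    congr 2 <;> · rw [hw]; push_cast; ring
  rw [key, norm_mul]
  simp [map_mul, Complex.norm_exp, Complex.norm_I,
    ← Complex.ofReal_sin, Complex.norm_real]
  rw [hw, ← Complex.ofReal_sin, Complex.norm_real, Real.norm_eq_abs]

theorem complex_exponential_increment_log_bound (α : ℝ) (hα : 0 < α) (z t s : ℝ)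
    (hts : t ≠ s) :
    ‖Complex.exp (Complex.I * t * z) - Complex.exp (Complex.I * s * z)‖ ≤
      2 * (Real.log (Real.exp α + |z| / 2) / Real.log (Real.exp α + 1 / |t - s|)) ^ α := by
  have hu : 0 < |t - s| := abs_pos.mpr (sub_ne_zero.mpr hts)
  set A : ℝ := |z| / 2 with hA
  set B : ℝ := 1 / |t - s| with hB
  have hA0 : 0 ≤ A := by positivity
  have hB0 : 0 < B := by positivity
  set LA : ℝ := Real.log (Real.exp α + A) with hLA
  set LB : ℝ := Real.log (Real.exp α + B) with hLB
  have hLa : ∀ x : ℝ, 0 ≤ x → α ≤ Real.log (Real.exp α + x) := by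
    intro x hx
    calc α = Real.log (Real.exp α) := (Real.log_exp α).symm
    _ ≤ _ := Real.log_le_log (Real.exp_pos α) (by linarith)
  have hLApos : 0 < LA := lt_of_lt_of_le hα (hLa A hA0)
  have hLBpos : 0 < LB := lt_of_lt_of_le hα (hLa B hB0.le)
  rw [norm_id']
  have key : |Real.sin ((t - s) * z / 2)| ≤ (LA / LB) ^ α := by
    rcases le_total B A with hAB | hAB
    · have h1 : LB ≤ LA := Real.log_le_log (by positivity) (by linarith)
      have : (1:ℝ) ≤ LA / LB := (one_le_div hLBpos).mpr h1
      calc |Real.sin ((t - s) * z / 2)| ≤ 1 :=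
            abs_le.mpr ⟨Real.neg_one_le_sin _, Real.sin_le_one _⟩
      _ ≤ (LA / LB) ^ α := Real.one_le_rpow this hα.le
    · have h1 : |Real.sin ((t - s) * z / 2)| ≤ A / B := by
        calc |Real.sin ((t - s) * z / 2)| ≤ |(t - s) * z / 2| := Real.abs_sin_le_abs
        _ = A / B := by rw [hA, hB]; rw [abs_div, abs_mul]; simp [abs_of_nonneg]; ring
      have h2 : A / LA ^ α ≤ B / LB ^ α := mono_aux' α hα hA0 hB0.le hAB
      have hLAp : (0:ℝ) < LA ^ α := Real.rpow_pos_of_pos hLApos α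
      have hLBp : (0:ℝ) < LB ^ α := Real.rpow_pos_of_pos hLBpos α
      have h3 : A / B ≤ LA ^ α / LB ^ α := by
        rw [div_le_div_iff₀ hLAp hLBp] at h2
        rw [div_le_div_iff₀ hB0 hLBp]
        linarith
      calc |Real.sin ((t - s) * z / 2)| ≤ A / B := h1
      _ ≤ LA ^ α / LB ^ α := h3
      _ = (LA / LB) ^ α := (Real.div_rpow hLApos.le hLBpos.le α).symm
  linarith [key]
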